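/- Let μ be a regular cardinal, C a collection of <μ-presented R-modules, and M a μ-generated R-module. If Player 2 has a winning strategy in the C-filtration game of length μ on M, then M is C-filtered. -/

import Mathlib

universe u v

open Cardinal

variable (R : Type u) [Ring R]

/-- The quotient `N'/N` of two submodules of a module, presented as the quotient of `N'`
by the trace of `N` on `N'`. -/
abbrev SubQuot {M : Type v} [AddCommGroup M] [Module R M] (N N' : Submodule R M) : Type v :=
  N' ⧸ N.comap N'.subtype

/-- `F` is a `C`-filtration of `M` of length `η`: an increasing continuous chain of
submodules starting at `⊥` and ending (at stage `η`) at `⊤`, all of whose consecutive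
quotients are isomorphic to members of `C`. -/
structure IsCFiltration (C : Set (ModuleCat.{v} R)) {M : Type v} [AddCommGroup M]
    [Module R M] (η : Ordinal.{v}) (F : Ordinal.{v} → Submodule R M) : Prop where
  bot : F 0 = ⊥
  top : F η = ⊤
  mono : ∀ i j : Ordinal.{v}, i ≤ j → j ≤ η → F i ≤ F j
  continuous : ∀ i : Ordinal.{v}, i ≤ η → Order.IsSuccLimit i →
    F i = ⨆ j : {j : Ordinal.{v} // j < i}, F j.1
  quot : ∀ i : Ordinal.{v}, i + 1 ≤ η →
    ∃ P ∈ C, Nonempty ((SubQuot R (F i) (F (i + 1))) ≃ₗ[R] P)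

/-- A module is `C`-filtered if it admits a `C`-filtration. -/
def IsCFiltered (C : Set (ModuleCat.{v} R)) (M : Type v) [AddCommGroup M]
    [Module R M] : Prop :=
  ∃ (η : Ordinal.{v}) (F : Ordinal.{v} → Submodule R M), IsCFiltration R C η F

/-- A module is `C`-filtered via a filtration of length `< μ`. -/
def IsCFilteredLt (C : Set (ModuleCat.{v} R)) (μ : Cardinal.{v}) (M : Type v)
    [AddCommGroup M] [Module R M] : Prop :=
  ∃ η : Ordinal.{v}, η < μ.ord ∧ ∃ F : Ordinal.{v} → Submodule R M, IsCFiltration R C η F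

/-- A module is `<μ`-presented: it has `<μ` many generators and `<μ` many relations. -/
def LtPresented (μ : Cardinal.{v}) (N : Type v) [AddCommGroup N] [Module R N] : Prop :=
  ∃ s : Set N, #s < μ ∧ Submodule.span R s = ⊤ ∧
    ∃ t : Set (s →₀ R), #t < Cardinal.lift.{u} μ ∧
      Submodule.span R t =
        LinearMap.ker (Finsupp.linearCombination R ((↑) : s → N))

/-- `P_μ(X)`: the subsets of `X` of size `< μ`. -/
def PMu (μ : Cardinal.{v}) (X : Type v) : Set (Set X) := {z | #z < μ}

/-- `D` is club in `P_μ(X)`: it consists of `<μ`-sized sets, is `⊆`-cofinal, and is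
closed under unions of `⊆`-increasing chains of length `< μ`. -/
def IsClubIn (μ : Cardinal.{v}) {X : Type v} (D : Set (Set X)) : Prop :=
  D ⊆ PMu μ X ∧
  (∀ z : Set X, #z < μ → ∃ d ∈ D, z ⊆ d) ∧
  (∀ (ι : Type v) [LinearOrder ι] [Nonempty ι], #ι < μ →
    ∀ c : ι → Set X, (∀ i j : ι, i ≤ j → c i ⊆ c j) → (∀ i, c i ∈ D) → (⋃ i, c i) ∈ D)

/-- `S` is stationary in `P_μ(X)`: it meets every club. -/
def IsStationaryIn (μ : Cardinal.{v}) {X : Type v} (S : Set (Set X)) : Prop :=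
  ∀ D : Set (Set X), IsClubIn μ D → (S ∩ D).Nonempty

/-- Validity of round `i` of the `C`-filtration game of length `μ` on `M`, where
`X k` is Player 1's move and `Z k` Player 2's move at round `k`: Player 2's move
`Z i` has size `< μ`, its span contains `X i` and all previous moves, and
`⟨Z i⟩ / ⟨⋃_{k<i} Z k⟩` is `C`-filtered. -/
def ValidRound (C : Set (ModuleCat.{v} R)) (μ : Cardinal.{v}) {M : Type v}
    [AddCommGroup M] [Module R M] (X Z : Ordinal.{v} → Set M) (i : Ordinal.{v}) :
    Prop :=
  #(Z i) < μ ∧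
  X i ∪ (⋃ k : {k : Ordinal.{v} // k < i}, Z k.1) ⊆
    (Submodule.span R (Z i) : Set M) ∧
  IsCFiltered R C
    (SubQuot R (Submodule.span R (⋃ k : {k : Ordinal.{v} // k < i}, Z k.1))
      (Submodule.span R (Z i)))

/-- Player 1 has a winning strategy in the `C`-filtration game of length `μ` on `M`:
a function `σ` producing, from Player 2's previous moves, a `<μ`-sized challenge set
(depending only on the moves so far), such that no play of Player 2 survives all
`μ` rounds against `σ`. -/
def P1WinsFiltGame (C : Set (ModuleCat.{v} R)) (μ : Cardinal.{v}) (M : Type v)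
    [AddCommGroup M] [Module R M] : Prop :=
  ∃ σ : (Ordinal.{v} → Set M) → Ordinal.{v} → Set M,
    (∀ Z i, #(σ Z i) < μ) ∧
    (∀ Z Z' i, (∀ k, k < i → Z k = Z' k) → σ Z i = σ Z' i) ∧
    ∀ Z : Ordinal.{v} → Set M,
      ¬ (∀ i, i < μ.ord → ValidRound R C μ (σ Z) Z i)

/-- Player 2 has a winning strategy in the `C`-filtration game of length `μ` on `M`:
a function `τ` producing, from Player 1's challenges so far (the response at round
`i` depends only on the challenges up to round `i`), valid responses at every round
`i < μ` against every legal play of Player 1. -/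
def P2WinsFiltGame (C : Set (ModuleCat.{v} R)) (μ : Cardinal.{v}) (M : Type v)
    [AddCommGroup M] [Module R M] : Prop :=
  ∃ τ : (Ordinal.{v} → Set M) → Ordinal.{v} → Set M,
    (∀ X X' i, (∀ k, k ≤ i → X k = X' k) → τ X i = τ X' i) ∧
    ∀ X : Ordinal.{v} → Set M, (∀ i, i < μ.ord → #(X i) < μ) →
      ∀ i, i < μ.ord → ValidRound R C μ X (τ X) i

section CFiltAuxSection
variable {M : Type v} [AddCommGroup M] [Module R M]


theorem comap_iSup_of_surjective {M₂ : Type*} [AddCommGroup M₂] [Module R M₂]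
    {ι : Sort*} [Nonempty ι] (f : M →ₗ[R] M₂) (hf : Function.Surjective f)
    (S : ι → Submodule R M₂) : (⨆ i, S i).comap f = ⨆ i, (S i).comap f := by
  have h1 : (⨆ i, S i) = Submodule.map f (⨆ i, (S i).comap f) := by
    rw [Submodule.map_iSup]
    exact iSup_congr fun i => (Submodule.map_comap_eq_of_surjective hf (S i)).symm
  rw [h1, Submodule.comap_map_eq]
  refine sup_eq_left.2 ?_
  obtain ⟨i⟩ := ‹Nonempty ι›
  refine le_trans ?_ (le_iSup (fun i => (S i).comap f) i)
  intro x hx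
  simp only [Submodule.mem_comap, LinearMap.mem_ker.1 hx, Submodule.zero_mem]

/-- The lift of a submodule of the subquotient `N'/N` to a submodule of `M`. -/
noncomputable def liftSub (N N' : Submodule R M) (G : Submodule R (SubQuot R N N')) :
    Submodule R M :=
  Submodule.map N'.subtype (G.comap (N.comap N'.subtype).mkQ)

theorem liftSub_mono {N N' : Submodule R M} {G G' : Submodule R (SubQuot R N N')}
    (h : G ≤ G') : liftSub R N N' G ≤ liftSub R N N' G' :=
  Submodule.map_mono (Submodule.comap_mono h)

theorem liftSub_le (N N' : Submodule R M) (G : Submodule R (SubQuot R N N')) :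
    liftSub R N N' G ≤ N' :=
  Submodule.map_subtype_le N' _

theorem liftSub_bot {N N' : Submodule R M} (h : N ≤ N') :
    liftSub R N N' (⊥ : Submodule R (SubQuot R N N')) = N := by
  rw [liftSub, Submodule.comap_bot, Submodule.ker_mkQ, Submodule.map_comap_subtype]
  exact inf_eq_right.2 h

theorem liftSub_top (N N' : Submodule R M) :
    liftSub R N N' (⊤ : Submodule R (SubQuot R N N')) = N' := by
  rw [liftSub, Submodule.comap_top, Submodule.map_top, Submodule.range_subtype]

theorem liftSub_iSup (N N' : Submodule R M) {ι : Sort*} [Nonempty ι]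
    (S : ι → Submodule R (SubQuot R N N')) :
    liftSub R N N' (⨆ i, S i) = ⨆ i, liftSub R N N' (S i) := by
  rw [liftSub, comap_iSup_of_surjective R _ (Submodule.mkQ_surjective _), Submodule.map_iSup]
  rfl

theorem subQuot_congr {N₁ N₂ N₁' N₂' : Submodule R M} (hN : N₁ = N₁') (hN' : N₂ = N₂') :
    Nonempty ((SubQuot R N₁ N₂) ≃ₗ[R] SubQuot R N₁' N₂') := by
  subst hN; subst hN'; exact ⟨LinearEquiv.refl R _⟩

theorem nonempty_subQuotEquiv (N N' : Submodule R M) (G G' : Submodule R (SubQuot R N N')) :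
    Nonempty (SubQuot R (liftSub R N N' G) (liftSub R N N' G') ≃ₗ[R] SubQuot R G G') := by
  classical
  have hBN' : liftSub R N N' G' ≤ N' := liftSub_le R N N' G'
  let incl : liftSub R N N' G' →ₗ[R] N' := Submodule.inclusion hBN'
  let q : N' →ₗ[R] SubQuot R N N' := (N.comap N'.subtype).mkQ
  have hmem : ∀ b : liftSub R N N' G', q (incl b) ∈ G' := by
    rintro ⟨b, hb⟩
    obtain ⟨x, hx, hxb⟩ := Submodule.mem_map.1 hb
    have hix : incl ⟨b, hb⟩ = x := Subtype.ext hxb.symm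
    rw [hix]
    exact Submodule.mem_comap.1 hx
  let φ : liftSub R N N' G' →ₗ[R] SubQuot R G G' :=
    (G.comap G'.subtype).mkQ ∘ₗ LinearMap.codRestrict G' (q ∘ₗ incl) hmem
  have hsurj : Function.Surjective φ := by
    intro y
    obtain ⟨g', rfl⟩ := Submodule.mkQ_surjective _ y
    obtain ⟨n', hn'⟩ := Submodule.mkQ_surjective (N.comap N'.subtype) (g' : SubQuot R N N')
    have hb : (n' : M) ∈ liftSub R N N' G' :=
      Submodule.mem_map.2 ⟨n', Submodule.mem_comap.2 (by rw [show (N.comap N'.subtype).mkQ n' = (g' : SubQuot R N N') from hn']; exact g'.2), rfl⟩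
    refine ⟨⟨(n' : M), hb⟩, ?_⟩
    have h1 : LinearMap.codRestrict G' (q ∘ₗ incl) hmem ⟨(n' : M), hb⟩ = g' := by
      apply Subtype.ext
      show q (incl ⟨(n' : M), hb⟩) = (g' : SubQuot R N N')
      have hix : incl ⟨(n' : M), hb⟩ = n' := Subtype.ext rfl
      rw [hix]
      exact hn'
    show (G.comap G'.subtype).mkQ (LinearMap.codRestrict G' (q ∘ₗ incl) hmem ⟨(n' : M), hb⟩) = _
    rw [h1]
  have hker : LinearMap.ker φ = (liftSub R N N' G).comap (liftSub R N N' G').subtype := by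
    ext b
    have hphi : (φ b = 0) ↔ q (incl b) ∈ G := by
      show ((G.comap G'.subtype).mkQ (LinearMap.codRestrict G' (q ∘ₗ incl) hmem b) = 0) ↔ _
      rw [Submodule.mkQ_apply, Submodule.Quotient.mk_eq_zero]
      rfl
    rw [LinearMap.mem_ker, hphi]
    constructor
    · intro hg
      exact Submodule.mem_comap.2 (Submodule.mem_map.2 ⟨incl b, Submodule.mem_comap.2 hg, rfl⟩)
    · intro hg
      obtain ⟨x, hx, hxb⟩ := Submodule.mem_map.1 (Submodule.mem_comap.1 hg)
      have hix : incl b = x := Subtype.ext hxb.symm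
      rw [hix]
      exact Submodule.mem_comap.1 hx
  exact ⟨(Submodule.quotEquivOfEq _ _ hker.symm).trans (LinearMap.quotKerEquivOfSurjective φ hsurj)⟩


theorem isCFiltered_of_subsingleton (C : Set (ModuleCat.{v} R))
    (M₀ : Type v) [AddCommGroup M₀] [Module R M₀] [Subsingleton M₀] :
    IsCFiltered R C M₀ := by
  have hbt : (⊥ : Submodule R M₀) = ⊤ := by
    apply Submodule.ext
    intro x
    have hx : x = 0 := Subsingleton.elim x 0
    simp [hx]
  refine ⟨0, fun _ => ⊥, rfl, hbt, fun _ _ _ _ => le_rfl, ?_, ?_⟩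
  · intro i hi hl
    rw [nonpos_iff_eq_zero] at hi
    exact absurd hi hl.ne_zero
  · intro i hi
    rw [Ordinal.add_one_eq_succ, nonpos_iff_eq_zero] at hi
    exact absurd hi (Ordinal.succ_ne_zero i)

theorem isCFiltered_of_chain (C : Set (ModuleCat.{v} R))
    {M : Type v} [AddCommGroup M] [Module R M] (lam : Ordinal.{v})
    (hlam : Order.IsSuccLimit lam) (N : Ordinal.{v} → Submodule R M)
    (hmono : ∀ i j : Ordinal.{v}, i ≤ j → N i ≤ N j)
    (hbot : N 0 = ⊥) (htop : N lam = ⊤)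
    (hcont : ∀ i : Ordinal.{v}, Order.IsSuccLimit i → N i = ⨆ j : {j : Ordinal.{v} // j < i}, N j.1)
    (hquot : ∀ i : Ordinal.{v}, IsCFiltered R C (SubQuot R (N i) (N (i + 1)))) :
    IsCFiltered R C M := by
  classical
  choose η G hG using hquot
  have hadd1le : ∀ {a b : Ordinal.{v}}, a < b → a + 1 ≤ b := fun h => by
    rw [Ordinal.add_one_eq_succ]; exact Order.succ_le_of_lt h
  have hlt1 : ∀ a : Ordinal.{v}, a < a + 1 := fun a => by
    rw [Ordinal.add_one_eq_succ]; exact Order.lt_succ a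
  have hsucc : ∀ i : Ordinal.{v}, N i ≤ N (i + 1) := fun i => hmono i (i+1) (hlt1 i).le
  have hL0 : ∀ i, liftSub R (N i) (N (i+1)) (G i 0) = N i := fun i => by
    rw [(hG i).bot, liftSub_bot R (hsucc i)]
  have hLtop : ∀ i, liftSub R (N i) (N (i+1)) (G i (η i)) = N (i+1) := fun i => by
    rw [(hG i).top, liftSub_top]
  have hLmono : ∀ i γ δ, γ ≤ δ → δ ≤ η i →
      liftSub R (N i) (N (i+1)) (G i γ) ≤ liftSub R (N i) (N (i+1)) (G i δ) :=
    fun i γ δ h1 h2 => liftSub_mono R ((hG i).mono γ δ h1 h2)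
  have hLle : ∀ i γ, liftSub R (N i) (N (i+1)) (G i γ) ≤ N (i+1) :=
    fun i γ => liftSub_le R _ _ _
  have hNle : ∀ i γ, γ ≤ η i → N i ≤ liftSub R (N i) (N (i+1)) (G i γ) := fun i γ h =>
    (hL0 i).symm.trans_le (hLmono i 0 γ zero_le h)
  -- the accumulated length function
  set e : Ordinal.{v} → Ordinal.{v} := fun i =>
    Ordinal.limitRecOn i 0 (fun j v => v + η j)
      (fun j _ f => ⨆ k : Set.Iio j, f k.1 k.2) with hedef
  have he0 : e 0 = 0 := Ordinal.limitRecOn_zero _ _ _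
  have hesucc' : ∀ i, e (Order.succ i) = e i + η i := fun i =>
    Ordinal.limitRecOn_succ _ _ _ _
  have hesucc : ∀ i, e (i + 1) = e i + η i := fun i => by
    rw [Ordinal.add_one_eq_succ]; exact hesucc' i
  have helim : ∀ i, Order.IsSuccLimit i → e i = ⨆ k : Set.Iio i, e k.1 := fun i h =>
    Ordinal.limitRecOn_limit _ _ _ _ h
  have hemono : ∀ i j : Ordinal.{v}, j ≤ i → e j ≤ e i := by
    intro i
    induction i using Ordinal.induction with
    | h i IH =>
      intro j hj
      rcases eq_or_lt_of_le hj with rfl | hj'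
      · exact le_rfl
      rcases Ordinal.zero_or_succ_or_isSuccLimit i with rfl | ⟨k, rfl⟩ | hl
      · exact absurd hj' not_lt_zero
      · have hjk : j ≤ k := Order.lt_succ_iff.1 hj'
        calc e j ≤ e k := IH k (Order.lt_succ k) j hjk
          _ ≤ e k + η k := le_self_add
          _ = e (Order.succ k) := (hesucc' k).symm
      · rw [helim i hl]
        exact Ordinal.le_iSup (fun k : Set.Iio i => e k.1) ⟨j, hj'⟩
  have hblock : ∀ {β m : Ordinal.{v}}, β < e m → ∃ k, e k ≤ β ∧ β < e (k + 1) := by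
    intro β m hβ
    have hns : {i : Ordinal.{v} | β < e i}.Nonempty := ⟨m, hβ⟩
    have hi₀ : β < e (Ordinal.lt_wf.min _ hns) := Ordinal.lt_wf.min_mem _ hns
    have hmin : ∀ k, k < (Ordinal.lt_wf.min _ hns) → ¬ β < e k :=
      fun k hk hc => Ordinal.lt_wf.not_lt_min {i | β < e i} hc hk
    rcases Ordinal.zero_or_succ_or_isSuccLimit (Ordinal.lt_wf.min _ hns) with h0 | ⟨k, hk⟩ | hl
    · rw [h0, he0] at hi₀; exact absurd hi₀ not_lt_zero
    · refine ⟨k, ?_, ?_⟩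
      · exact not_lt.1 (fun hc => hmin k (by rw [← hk]; exact Order.lt_succ k) hc)
      · rw [Ordinal.add_one_eq_succ, hk]; exact hi₀
    · rw [helim _ hl, Ordinal.lt_iSup_iff] at hi₀
      obtain ⟨⟨k, hk⟩, hβk⟩ := hi₀
      exact absurd hβk (hmin k hk)
  have hconst : ∀ i j : Ordinal.{v}, j ≤ i → e j = e i → N j = N i := by
    intro i
    induction i using Ordinal.induction with
    | h i IH =>
      intro j hj he
      rcases eq_or_lt_of_le hj with rfl | hj'
      · rfl
      rcases Ordinal.zero_or_succ_or_isSuccLimit i with rfl | ⟨k, hk⟩ | hl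
      · exact absurd hj' not_lt_zero
      · have hik : i = k + 1 := by rw [Ordinal.add_one_eq_succ]; exact hk.symm
        subst hik
        have hki : k < k + 1 := hlt1 k
        have hjk : j ≤ k := by
          rw [Ordinal.add_one_eq_succ] at hj'; exact Order.lt_succ_iff.1 hj'
        have hek : e j = e k :=
          le_antisymm (hemono k j hjk) (le_trans (hemono (k+1) k hki.le) he.ge)
        have hNjk : N j = N k := IH k hki j hjk hek
        have hη : η k = 0 := by
          refine (add_right_inj (e k)).1 ?_
          rw [add_zero, ← hesucc k, ← he]; exact hek
        have hNk : N (k + 1) = N k := by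
          rw [← hLtop k, hη, hL0 k]
        rw [hNjk, hNk]
      · rw [hcont i hl]
        apply le_antisymm
        · exact le_iSup_of_le ⟨j, hj'⟩ le_rfl
        · apply iSup_le
          rintro ⟨k, hk⟩
          rcases le_total k j with h | h
          · exact hmono k j h
          · have hek : e j = e k := le_antisymm (hemono k j h) (he ▸ hemono i k hk.le)
            exact (IH k hk j h hek).ge
  -- the concatenated filtration
  set F : Ordinal.{v} → Submodule R M := fun α =>
    ⨆ (i : Ordinal.{v}) (γ : Ordinal.{v}) (_ : γ ≤ η i ∧ e i + γ ≤ α),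
      liftSub R (N i) (N (i+1)) (G i γ) with hFdef
  have hterm : ∀ i γ α, γ ≤ η i → e i + γ ≤ α →
      liftSub R (N i) (N (i+1)) (G i γ) ≤ F α := fun i γ α h1 h2 => by
    simp only [hFdef]
    exact le_iSup_of_le i (le_iSup_of_le γ (le_iSup_of_le ⟨h1, h2⟩ le_rfl))
  have hFle : ∀ (α : Ordinal.{v}) (T : Submodule R M),
      (∀ i γ, γ ≤ η i → e i + γ ≤ α → liftSub R (N i) (N (i+1)) (G i γ) ≤ T) → F α ≤ T :=
    fun α T h => by
      simp only [hFdef]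
      exact iSup_le fun i => iSup_le fun γ => iSup_le fun hc => h i γ hc.1 hc.2
  have hFmono : ∀ α β : Ordinal.{v}, α ≤ β → F α ≤ F β := fun α β hab =>
    hFle _ _ fun i γ h1 h2 => hterm i γ β h1 (h2.trans hab)
  have hFe : ∀ j, F (e j) = N j := by
    intro j
    apply le_antisymm
    · refine hFle _ _ fun k γ h1 h2 => ?_
      rcases lt_or_ge k j with hk | hk
      · exact (hLle k γ).trans (hmono (k+1) j (hadd1le hk))
      · have hek : e k = e j := le_antisymm ((le_self_add (a := e k) (b := γ)).trans h2) (hemono k j hk)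
        have hγ : γ = 0 := by
          refine (add_right_inj (e k)).1 ?_
          rw [add_zero]
          exact le_antisymm (h2.trans hek.ge) (le_self_add)
        subst hγ
        rw [hL0 k]
        exact (hconst k j hk hek.symm).ge
    · have h := hterm j 0 (e j) zero_le (by rw [add_zero])
      rwa [hL0 j] at h
  have hsub_lt : ∀ {α i : Ordinal.{v}}, e i ≤ α → α < e (i+1) → α - e i < η i := by
    intro α i h1 h2
    by_contra hc
    push_neg at hc
    have hge : e (i+1) ≤ α := by
      rw [hesucc i]
      calc e i + η i ≤ e i + (α - e i) := add_le_add_right hc _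
        _ = α := Ordinal.add_sub_cancel_of_le h1
    exact absurd h2 hge.not_gt
  have hblockF : ∀ α i, e i ≤ α → α < e (i+1) →
      F α = liftSub R (N i) (N (i+1)) (G i (α - e i)) := by
    intro α i h1 h2
    have hδ1 : e i + (α - e i) = α := Ordinal.add_sub_cancel_of_le h1
    have hδlt := hsub_lt h1 h2
    apply le_antisymm
    · refine hFle _ _ fun k γ hγ1 hγ2 => ?_
      rcases lt_trichotomy k i with hk | rfl | hk
      · exact (hLle k γ).trans ((hmono (k+1) i (hadd1le hk)).trans (hNle i _ hδlt.le))
      · refine hLmono k γ _ ?_ hδlt.le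
        rw [← Ordinal.add_sub_cancel (e k) γ]
        refine Ordinal.sub_le.2 ?_
        rw [hδ1]; exact hγ2
      · exfalso
        have hge : e (i+1) ≤ α :=
          ((hemono k (i+1) (hadd1le hk)).trans (le_self_add)).trans hγ2
        exact absurd hge h2.not_ge
    · exact hterm i (α - e i) α hδlt.le hδ1.le
  have hFbot : F 0 = ⊥ := by
    apply le_antisymm _ bot_le
    refine hFle _ _ fun i γ h1 h2 => ?_
    have hγ : γ = 0 := nonpos_iff_eq_zero.1 ((le_add_self (a := γ) (b := e i)).trans h2)
    subst hγ
    have hei0 : e i = 0 := nonpos_iff_eq_zero.1 (by rw [← add_zero (e i)]; exact h2)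
    rw [hL0 i, ← hconst i 0 zero_le (by rw [he0, hei0]), hbot]
  have hFtop : F (e lam) = ⊤ := by
    apply le_antisymm le_top
    rw [← htop, hcont lam hlam]
    apply iSup_le
    rintro ⟨j, hj⟩
    have hj1 : j + 1 ≤ lam := (by rw [Ordinal.add_one_eq_succ]; exact hlam.succ_lt hj :
      j + 1 < lam).le
    refine (hmono j (j+1) (hlt1 j).le).trans ?_
    rw [← hLtop j]
    exact hterm j (η j) (e lam) le_rfl (by rw [← hesucc j]; exact hemono lam (j+1) hj1)
  have hFcont : ∀ α : Ordinal.{v}, α ≤ e lam → Order.IsSuccLimit α →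
      F α = ⨆ j : {j : Ordinal.{v} // j < α}, F j.1 := by
    intro α _ hαlim
    apply le_antisymm
    · refine hFle _ _ fun i γ h1 h2 => ?_
      rcases lt_or_eq_of_le h2 with hlt | heq
      · exact (hterm i γ (e i + γ) h1 le_rfl).trans (le_iSup_of_le ⟨e i + γ, hlt⟩ le_rfl)
      · rcases eq_or_ne γ 0 with rfl | hγ0
        · rw [add_zero] at heq
          rw [hL0 i]
          have hns : {j : Ordinal.{v} | e j = α}.Nonempty := ⟨i, heq⟩
          have hj₀ : e (Ordinal.lt_wf.min _ hns) = α := Ordinal.lt_wf.min_mem _ hns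
          have hminj : ∀ k, k < Ordinal.lt_wf.min _ hns → e k < α := fun k hk =>
            lt_of_le_of_ne ((hemono _ k hk.le).trans_eq hj₀)
              (fun hc => Ordinal.lt_wf.not_lt_min {j | e j = α} hc hk)
          have hj₀i : Ordinal.lt_wf.min _ hns ≤ i :=
            not_lt.1 fun hc => Ordinal.lt_wf.not_lt_min {j | e j = α} heq hc
          have hNij : N i = N (Ordinal.lt_wf.min _ hns) :=
            (hconst i _ hj₀i (hj₀.trans heq.symm)).symm
          rw [hNij]
          rcases Ordinal.zero_or_succ_or_isSuccLimit (Ordinal.lt_wf.min _ hns) with h0 | ⟨k, hk⟩ | hl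
          · exfalso
            rw [h0, he0] at hj₀
            exact hαlim.ne_zero hj₀.symm
          · have hj₀k : Ordinal.lt_wf.min _ hns = k + 1 := by
              rw [Ordinal.add_one_eq_succ]; exact hk.symm
            have hek : e k < α := hminj k (by rw [hj₀k]; exact hlt1 k)
            have hηk : e k + η k = α := by rw [← hesucc k, ← hj₀k]; exact hj₀
            have hηk0 : η k ≠ 0 := fun hc => by
              rw [hc, add_zero] at hηk; exact hek.ne hηk
            have hηklim : Order.IsSuccLimit (η k) := by
              rcases Ordinal.zero_or_succ_or_isSuccLimit (η k) with hc | ⟨m, hm⟩ | hli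
              · exact absurd hc hηk0
              · exfalso
                have hx1 : e k + m < α := by
                  rw [← hηk, ← hm]
                  exact add_lt_add_right (Order.lt_succ m) _
                have hx2 := hαlim.succ_lt hx1
                rw [← hηk, ← hm, Ordinal.add_succ] at hx2
                exact hx2.false
              · exact hli
            rw [hj₀k, ← hLtop k, (hG k).continuous (η k) le_rfl hηklim]
            haveI : Nonempty {δ : Ordinal.{v} // δ < η k} :=
              ⟨⟨0, pos_iff_ne_zero.2 hηk0⟩⟩
            rw [liftSub_iSup]
            apply iSup_le
            rintro ⟨δ, hδ⟩
            refine (hterm k δ (e k + δ) hδ.le le_rfl).trans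
              (le_iSup_of_le ⟨e k + δ, ?_⟩ le_rfl)
            rw [← hηk]
            exact add_lt_add_right hδ _
          · rw [hcont _ hl]
            apply iSup_le
            rintro ⟨k, hk⟩
            have hx := hterm k 0 (e k) zero_le (by rw [add_zero])
            rw [hL0 k] at hx
            exact hx.trans (le_iSup_of_le ⟨e k, hminj k hk⟩ le_rfl)
        · have hγlim : Order.IsSuccLimit γ := by
            rcases Ordinal.zero_or_succ_or_isSuccLimit γ with hc | ⟨m, hm⟩ | hli
            · exact absurd hc hγ0
            · exfalso
              have hx1 : e i + m < α := by
                rw [← heq, ← hm]; exact add_lt_add_right (Order.lt_succ m) _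
              have hx2 := hαlim.succ_lt hx1
              rw [← heq, ← hm, Ordinal.add_succ] at hx2
              exact hx2.false
            · exact hli
          rw [(hG i).continuous γ h1 hγlim]
          haveI : Nonempty {δ : Ordinal.{v} // δ < γ} :=
            ⟨⟨0, pos_iff_ne_zero.2 hγ0⟩⟩
          rw [liftSub_iSup]
          apply iSup_le
          rintro ⟨δ, hδ⟩
          refine (hterm i δ (e i + δ) (hδ.le.trans h1) le_rfl).trans
            (le_iSup_of_le ⟨e i + δ, ?_⟩ le_rfl)
          rw [← heq]
          exact add_lt_add_right hδ _
    · exact iSup_le fun j => hFmono j.1 α j.2.le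
  have hFquot : ∀ α : Ordinal.{v}, α + 1 ≤ e lam →
      ∃ P ∈ C, Nonempty ((SubQuot R (F α) (F (α + 1))) ≃ₗ[R] P) := by
    intro α hα1
    have hα : α < e lam := lt_of_lt_of_le (hlt1 α) hα1
    obtain ⟨i, hi1, hi2⟩ := hblock hα
    have hδeq : e i + (α - e i) = α := Ordinal.add_sub_cancel_of_le hi1
    have hδlt : α - e i < η i := hsub_lt hi1 hi2
    have hδ1 : e i + ((α - e i) + 1) = α + 1 := by rw [← add_assoc, hδeq]
    have hFα : F α = liftSub R (N i) (N (i+1)) (G i (α - e i)) := hblockF α i hi1 hi2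
    have hFα1 : F (α + 1) = liftSub R (N i) (N (i+1)) (G i ((α - e i) + 1)) := by
      rcases lt_or_eq_of_le (hadd1le hi2) with hlt | heq
      · rw [hblockF (α+1) i (hi1.trans (hlt1 α).le) hlt]
        congr 1
        rw [← hδ1, Ordinal.add_sub_cancel]
      · have hηi : η i = (α - e i) + 1 :=
          (add_right_inj (e i)).1 (by rw [hδ1, ← hesucc i]; exact heq.symm)
        rw [heq, hFe (i+1), ← hηi]
        exact (hLtop i).symm
    obtain ⟨P, hP, ⟨g⟩⟩ := (hG i).quot (α - e i) (hadd1le hδlt)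
    refine ⟨P, hP, ?_⟩
    obtain ⟨f⟩ := nonempty_subQuotEquiv R (N i) (N (i+1)) (G i (α - e i)) (G i ((α - e i) + 1))
    obtain ⟨f0⟩ := subQuot_congr R hFα hFα1
    exact ⟨(f0.trans f).trans g⟩
  exact ⟨e lam, F, hFbot, hFtop, fun i j hij _ => hFmono i j hij, hFcont, hFquot⟩



theorem isCFiltered_subQuot_congr (C : Set (ModuleCat.{v} R)) {M : Type v} [AddCommGroup M]
    [Module R M] {A A' B B' : Submodule R M} (hA : A = A') (hB : B = B')
    (h : IsCFiltered R C (SubQuot R A B)) : IsCFiltered R C (SubQuot R A' B') := by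
  subst hA; subst hB; exact h

theorem isCFiltered_of_plays (C : Set (ModuleCat.{v} R)) (μ : Cardinal.{v})
    {M : Type v} [AddCommGroup M] [Module R M] (hlam : Order.IsSuccLimit (μ.ord))
    (X Z : Ordinal.{v} → Set M)
    (hvalid : ∀ i, i < μ.ord → ValidRound R C μ X Z i)
    (hcover : (⊤ : Submodule R M) ≤
      Submodule.span R (⋃ k : {k : Ordinal.{v} // k < μ.ord}, Z k.1)) :
    IsCFiltered R C M := by
  classical
  have hlt1 : ∀ a : Ordinal.{v}, a < a + 1 := fun a => by
    rw [Ordinal.add_one_eq_succ]; exact Order.lt_succ a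
  have hNmono : ∀ i j : Ordinal.{v}, i ≤ j →
      Submodule.span R (⋃ k : {k : Ordinal.{v} // k < i}, Z k.1) ≤
      Submodule.span R (⋃ k : {k : Ordinal.{v} // k < j}, Z k.1) := by
    intro i j hij
    refine Submodule.span_mono (Set.iUnion_subset ?_)
    rintro ⟨k, hk⟩
    exact Set.subset_iUnion (fun k' : {k' : Ordinal.{v} // k' < j} => Z k'.1) ⟨k, hk.trans_le hij⟩
  have hZsub : ∀ k i : Ordinal.{v}, k < i →
      Z k ⊆ (Submodule.span R (⋃ k' : {k' : Ordinal.{v} // k' < i}, Z k'.1) : Set M) := by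
    intro k i hk
    exact (Set.subset_iUnion (fun k' : {k' : Ordinal.{v} // k' < i} => Z k'.1) ⟨k, hk⟩).trans Submodule.subset_span
  have hN0 : Submodule.span R (⋃ k : {k : Ordinal.{v} // k < (0 : Ordinal.{v})}, Z k.1) = ⊥ := by
    haveI : IsEmpty {k : Ordinal.{v} // k < (0 : Ordinal.{v})} :=
      ⟨fun k => not_lt_zero k.2⟩
    rw [Set.iUnion_of_empty, Submodule.span_empty]
  have hNtop : Submodule.span R (⋃ k : {k : Ordinal.{v} // k < μ.ord}, Z k.1) = ⊤ :=
    le_antisymm le_top hcover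
  have hNsucc : ∀ i : Ordinal.{v}, i < μ.ord →
      Submodule.span R (⋃ k : {k : Ordinal.{v} // k < i + 1}, Z k.1) =
      Submodule.span R (Z i) := by
    intro i hi
    apply le_antisymm
    · refine Submodule.span_le.2 (Set.iUnion_subset ?_)
      rintro ⟨k, hk⟩
      have hk' : k = i ∨ k < i := by
        rw [Ordinal.add_one_eq_succ, Order.lt_succ_iff_eq_or_lt] at hk
        exact hk
      rcases hk' with rfl | hk'
      · exact Submodule.subset_span
      · intro x hx
        exact (hvalid i hi).2.1 (Or.inr (Set.mem_iUnion.2 ⟨⟨k, hk'⟩, hx⟩))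
    · exact Submodule.span_le.2 (hZsub i (i+1) (hlt1 i))
  refine isCFiltered_of_chain R C μ.ord hlam
    (fun i => Submodule.span R (⋃ k : {k : Ordinal.{v} // k < i}, Z k.1))
    hNmono hN0 hNtop ?_ ?_
  · intro i hl
    apply le_antisymm
    · refine Submodule.span_le.2 (Set.iUnion_subset ?_)
      rintro ⟨k, hk⟩
      intro x hx
      have hk1 : k + 1 < i := by rw [Ordinal.add_one_eq_succ]; exact hl.succ_lt hk
      have hx1 := hZsub k (k+1) (hlt1 k) hx
      exact le_iSup (fun j : {j : Ordinal.{v} // j < i} =>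
        Submodule.span R (⋃ k' : {k' : Ordinal.{v} // k' < j.1}, Z k'.1)) ⟨k+1, hk1⟩ hx1
    · exact iSup_le fun j => hNmono j.1 i j.2.le
  · intro i
    by_cases hi : i < μ.ord
    · exact isCFiltered_subQuot_congr R C rfl (hNsucc i hi).symm (hvalid i hi).2.2
    · push_neg at hi
      haveI : Subsingleton (SubQuot R
          (Submodule.span R (⋃ k : {k : Ordinal.{v} // k < i}, Z k.1))
          (Submodule.span R (⋃ k : {k : Ordinal.{v} // k < i + 1}, Z k.1))) := by
        refine Submodule.Quotient.subsingleton_iff.2 ?_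
        have hNi : Submodule.span R (⋃ k : {k : Ordinal.{v} // k < i}, Z k.1) = ⊤ :=
          le_antisymm le_top (hNtop ▸ hNmono μ.ord i hi)
        rw [hNi, Submodule.comap_top]
      exact isCFiltered_of_subsingleton R C _


end CFiltAuxSection

/-- Let `μ` be a regular cardinal, `C` a collection of `<μ`-presented
modules, and `M` a `μ`-generated module.  If Player 2 has a winning strategy in the
`C`-filtration game of length `μ` on `M`, then `M` is `C`-filtered. -/
theorem cFiltered_of_p2Wins (μ : Cardinal.{v}) (hreg : μ.IsRegular)
    (C : Set (ModuleCat.{v} R)) (hC : ∀ P ∈ C, LtPresented R μ P)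
    (M : Type v) [AddCommGroup M] [Module R M]
    (hgen : ∃ s : Set M, #s ≤ μ ∧ Submodule.span R s = ⊤)
    (h : P2WinsFiltGame R C μ M) : IsCFiltered R C M := by
  classical
  obtain ⟨s, hsle, hsspan⟩ := hgen
  rcases Set.eq_empty_or_nonempty s with rfl | hsne
  · rw [Submodule.span_empty] at hsspan
    haveI : Subsingleton M := by
      constructor
      intro a b
      have ha : a ∈ (⊥ : Submodule R M) := by rw [hsspan]; trivial
      have hb : b ∈ (⊥ : Submodule R M) := by rw [hsspan]; trivial
      rw [Submodule.mem_bot] at ha hb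
      rw [ha, hb]
    exact isCFiltered_of_subsingleton R C M
  obtain ⟨τ, -, hτ⟩ := h
  have hlam : Order.IsSuccLimit (μ.ord) := Cardinal.isSuccLimit_ord hreg.aleph0_le
  haveI := hsne.to_subtype
  have hcard : #(↥s) ≤ #((μ.ord).ToType) := by
    rw [Cardinal.mk_ord_toType]; exact hsle
  obtain ⟨g⟩ := (Cardinal.le_def _ _).1 hcard
  set X : Ordinal.{v} → Set M := fun i =>
    if h : i < μ.ord then
      {((Function.invFun (⇑g) ((Ordinal.ToType.mk (o := μ.ord)) ⟨i, h⟩) : s) : M)}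
    else ∅ with hXdef
  have hXsmall : ∀ i, i < μ.ord → #(X i) < μ := by
    intro i hi
    simp only [hXdef, dif_pos hi, Cardinal.mk_singleton]
    exact Cardinal.one_lt_aleph0.trans_le hreg.aleph0_le
  have hvalid := hτ X hXsmall
  refine isCFiltered_of_plays R C μ hlam X (τ X) hvalid ?_
  rw [← hsspan]
  refine Submodule.span_le.2 ?_
  intro x hx
  obtain ⟨t, ht⟩ := Function.invFun_surjective g.injective ⟨x, hx⟩
  have hj2 : ((Ordinal.ToType.mk (o := μ.ord)).symm t).1 < μ.ord :=
    ((Ordinal.ToType.mk (o := μ.ord)).symm t).2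
  have hXj : x ∈ X ((Ordinal.ToType.mk (o := μ.ord)).symm t).1 := by
    simp only [hXdef, dif_pos hj2]
    have h1 : (Ordinal.ToType.mk (o := μ.ord))
        ⟨((Ordinal.ToType.mk (o := μ.ord)).symm t).1, hj2⟩ = t :=
      OrderIso.apply_symm_apply _ t
    rw [h1, ht]
    rfl
  have hx1 : x ∈ Submodule.span R (τ X ((Ordinal.ToType.mk (o := μ.ord)).symm t).1) :=
    (hvalid _ hj2).2.1 (Or.inl hXj)
  exact Submodule.span_le.2 ((Set.subset_iUnion
    (fun k : {k : Ordinal.{v} // k < μ.ord} => τ X k.1)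
    ⟨_, hj2⟩).trans Submodule.subset_span) hx1
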